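/- Let Γ be a finite graph, A an abelian group, and let Harm(Γ, A) denote the group of harmonic A-cochains on Γ: functions c on oriented edges with c(ē) = -c(e) for the reversed edge and Σ_{e into v} c(e) = 0 at every vertex v. If e₀ is an edge of Γ that is not a bridge (i.e., removing e₀ does not disconnect its connected component), and A is nontrivial, then the evaluation map ev_{e₀} : Harm(Γ, A) → A, c ↦ c(e₀), is surjective; in particular it is a nonzero homomorphism. -/

import Mathlib

open SimpleGraph Finset

private def flowL {V A : Type*} [DecidableEq V] [AddCommGroup A] (a : A)
    (L : List (V × V)) (u v : V) : A :=
  (L.map (fun e => (if e = (u, v) then a else 0) - (if e = (v, u) then a else 0))).sum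

private lemma flowL_anti {V A : Type*} [DecidableEq V] [AddCommGroup A] (a : A)
    (L : List (V × V)) (u v : V) : flowL a L v u = - flowL a L u v := by
  induction L with
  | nil => simp [flowL]
  | cons e L ih =>
    simp only [flowL, List.map_cons, List.sum_cons] at ih ⊢
    rw [ih]; abel

private lemma flowL_zero {V A : Type*} [DecidableEq V] [AddCommGroup A] (a : A)
    {L : List (V × V)} {u v : V} (h : ∀ e ∈ L, e ≠ (u, v) ∧ e ≠ (v, u)) :
    flowL a L u v = 0 := by
  refine List.sum_eq_zero ?_
  intro z hz
  simp only [List.mem_map] at hz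
  obtain ⟨e, he, rfl⟩ := hz
  simp [(h e he).1, (h e he).2]

private lemma sum_elem {V A : Type*} [Fintype V] [DecidableEq V] [AddCommGroup A]
    (a : A) (s w v : V) :
    ∑ u : V, ((if (s, w) = (u, v) then a else 0) - (if (s, w) = (v, u) then a else 0))
      = (if v = w then a else 0) - (if v = s then a else 0) := by
  rw [Finset.sum_sub_distrib]
  congr 1
  · simp only [Prod.mk.injEq]
    by_cases hwv : w = v
    · simp [hwv, Finset.sum_ite_eq, eq_comm]
    · simp [hwv, if_neg (fun h : v = w => hwv h.symm)]
  · simp only [Prod.mk.injEq]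
    by_cases hsv : s = v
    · simp [hsv, Finset.sum_ite_eq, eq_comm]
    · simp [hsv, if_neg (fun h : v = s => hsv h.symm)]

private lemma flowL_div {V A : Type*} [Fintype V] [DecidableEq V] [AddCommGroup A]
    (a : A) {H : SimpleGraph V} {s t : V} (p : H.Walk s t) (v : V) :
    ∑ u : V, flowL a (p.darts.map fun d => (d.fst, d.snd)) u v
      = (if v = t then a else 0) - (if v = s then a else 0) := by
  induction p with
  | nil => simp [flowL]
  | @cons s w t h q ih =>
    simp only [Walk.darts_cons, List.map_cons, flowL, List.sum_cons] at ih ⊢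
    rw [Finset.sum_add_distrib, ih, sum_elem]
    abel

/-- On a finite graph, if the edge `{x,y}` is not a bridge and `A` is a
nontrivial abelian group, then evaluation at this edge is a surjective
homomorphism from harmonic `A`-cochains to `A`: for every `a : A` there is a
harmonic cochain taking value `a` on the oriented edge `(x,y)`. -/
theorem harmonic_cochain_eval_surjective {V : Type*} [Fintype V] [DecidableEq V]
    (G : SimpleGraph V) (x y : V) (hxy : G.Adj x y)
    (hbridge : ¬ G.IsBridge s(x, y))
    (A : Type*) [AddCommGroup A] [Nontrivial A] :
    ∀ a : A, ∃ c : V → V → A,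
      (∀ u v : V, c v u = - c u v) ∧
      (∀ u v : V, ¬ G.Adj u v → c u v = 0) ∧
      (∀ v : V, ∑ u : V, c u v = 0) ∧
      c x y = a := by
  intro a
  rw [SimpleGraph.isBridge_iff] at hbridge
  push_neg at hbridge
  have hreach := hbridge
  obtain ⟨q⟩ := hreach.symm
  set P : List (V × V) := q.darts.map (fun d => (d.fst, d.snd)) with hP
  have hPkey : ∀ e ∈ P, G.Adj e.1 e.2 ∧ e ≠ (x, y) ∧ e ≠ (y, x) := by
    intro e he
    rw [hP, List.mem_map] at he
    obtain ⟨d, hd, rfl⟩ := he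
    have hadj := d.adj
    rw [SimpleGraph.deleteEdges_adj] at hadj
    obtain ⟨hG, hne⟩ := hadj
    have hne' : s(d.fst, d.snd) ≠ s(x, y) := fun h => hne (by simp [h])
    refine ⟨hG, ?_, ?_⟩
    · intro h
      apply hne'
      rw [show d.fst = x from congrArg Prod.fst h, show d.snd = y from congrArg Prod.snd h]
    · intro h
      apply hne'
      rw [show d.fst = y from congrArg Prod.fst h, show d.snd = x from congrArg Prod.snd h]
      exact Sym2.eq_swap
  refine ⟨fun u v =>
    ((if (x, y) = (u, v) then a else 0) - (if (x, y) = (v, u) then a else 0)) + flowL a P u v,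
    ?_, ?_, ?_, ?_⟩
  · intro u v
    beta_reduce
    rw [flowL_anti]
    abel
  · intro u v h
    have h1 : (x, y) ≠ (u, v) := fun he => h (by
      rw [show u = x from (congrArg Prod.fst he).symm, show v = y from (congrArg Prod.snd he).symm]
      exact hxy)
    have h2 : (x, y) ≠ (v, u) := fun he => h (by
      rw [show v = x from (congrArg Prod.fst he).symm, show u = y from (congrArg Prod.snd he).symm]
      exact hxy.symm)
    beta_reduce
    rw [if_neg h1, if_neg h2, flowL_zero a (fun e he => ⟨fun hc => h (by have := (hPkey e he).1; rw [hc] at this; exact this),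
      fun hc => h (by have := (hPkey e he).1; rw [hc] at this; exact this.symm)⟩)]
    simp
  · intro v
    beta_reduce
    rw [Finset.sum_add_distrib, sum_elem, flowL_div]
    abel
  · have h2 : (x, y) ≠ (y, x) := fun he => hxy.ne (congrArg Prod.fst he)
    beta_reduce
    rw [if_pos rfl, if_neg h2, flowL_zero a (fun e he => ⟨(hPkey e he).2.1, (hPkey e he).2.2⟩)]
    simp
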